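/- For every real number b with 0 ≤ b ≤ 1 and every real number θ, and any natural number m, if |b − e^{iθ}| ≤ ε, then |sin θ| ≤ ε and (if additionally ε ≤ 1/2) 1 − cos(mθ) ≤ (2/3)·m²·ε². -/

import Mathlib

set_option maxHeartbeats 1000000 in
/-- If `0 ≤ b ≤ 1` and `|b - e^{iθ}| ≤ ε`, then `|sin θ| ≤ ε`, and if additionally
`ε ≤ 1/2`, then `1 - cos (mθ) ≤ (2/3) * m² * ε²` for any natural number `m`. -/
theorem sin_abs_le_and_one_sub_cos_le (b θ ε : ℝ) (m : ℕ)
    (hb0 : 0 ≤ b) (hb1 : b ≤ 1)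
    (h : ‖(b : ℂ) - Complex.exp (θ * Complex.I)‖ ≤ ε) :
    |Real.sin θ| ≤ ε ∧
      (ε ≤ 1 / 2 → 1 - Real.cos (m * θ) ≤ (2 / 3) * m ^ 2 * ε ^ 2) := by
  have hε0 : 0 ≤ ε := le_trans (norm_nonneg _) h
  have h2 : (b - Real.cos θ) ^ 2 + Real.sin θ ^ 2 ≤ ε ^ 2 := by
    have hsq := pow_le_pow_left₀ (norm_nonneg _) h 2
    rw [Complex.sq_norm, Complex.normSq_apply] at hsq
    simp [Complex.exp_ofReal_mul_I_re, Complex.exp_ofReal_mul_I_im] at hsq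
    nlinarith [hsq]
  have hsin : |Real.sin θ| ≤ ε := by
    nlinarith [abs_nonneg (Real.sin θ), sq_abs (Real.sin θ), sq_nonneg (b - Real.cos θ)]
  refine ⟨hsin, fun hε => ?_⟩
  have hpyth := Real.sin_sq_add_cos_sq θ
  have hc0 : 0 ≤ Real.cos θ := by nlinarith [sq_nonneg (Real.sin θ)]
  have hc2 : 3 / 4 ≤ Real.cos θ ^ 2 := by nlinarith [sq_nonneg (b - Real.cos θ)]
  obtain ⟨k, hk⟩ : ∃ k : ℤ, k = round (θ / (2 * Real.pi)) := ⟨_, rfl⟩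
  obtain ⟨θ', hθ'⟩ : ∃ t : ℝ, t = θ - k * (2 * Real.pi) := ⟨_, rfl⟩
  have hπ := Real.pi_pos
  have h2π : (0:ℝ) < 2 * Real.pi := by linarith
  have hcos' : Real.cos θ' = Real.cos θ := by rw [hθ']; exact Real.cos_sub_int_mul_two_pi θ k
  have hsinθ' : Real.sin θ' = Real.sin θ := by rw [hθ']; exact Real.sin_sub_int_mul_two_pi θ k
  have habs : |θ'| ≤ Real.pi := by
    have hr : |θ / (2 * Real.pi) - (k:ℝ)| ≤ 1/2 := by
      rw [hk]; exact_mod_cast abs_sub_round (θ / (2 * Real.pi))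
    have heq : θ' = (θ / (2 * Real.pi) - k) * (2 * Real.pi) := by
      rw [hθ']; field_simp
    calc |θ'| = |θ / (2 * Real.pi) - k| * (2 * Real.pi) := by
            rw [heq, abs_mul, abs_of_pos h2π]
      _ ≤ 1 / 2 * (2 * Real.pi) := mul_le_mul_of_nonneg_right hr h2π.le
      _ = Real.pi := by ring
  have hlt : |θ'| < Real.pi / 2 := by
    by_contra hcon
    push_neg at hcon
    have := Real.cos_nonpos_of_pi_div_two_le_of_le hcon (by linarith)
    rw [Real.cos_abs, hcos'] at this
    nlinarith
  have htan : |θ'| * Real.cos θ ≤ |Real.sin θ| := by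
    rcases eq_or_ne θ' 0 with h0 | h0
    · rw [h0, abs_zero, zero_mul]; exact abs_nonneg _
    · have hpos : 0 < |θ'| := abs_pos.mpr h0
      have hlt2 := Real.lt_tan hpos hlt
      rw [Real.tan_eq_sin_div_cos, Real.cos_abs, hcos'] at hlt2
      have hcpos : 0 < Real.cos θ := by nlinarith
      have hs : Real.sin |θ'| ≤ |Real.sin θ| := by
        rw [← hsinθ']
        rcases abs_cases θ' with ⟨h1, _⟩ | ⟨h1, _⟩
        · rw [h1]; exact le_abs_self _
        · rw [h1, Real.sin_neg]; exact neg_le_abs _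
      calc |θ'| * Real.cos θ ≤ Real.sin |θ'| / Real.cos θ * Real.cos θ := by
            exact mul_le_mul_of_nonneg_right hlt2.le hc0
        _ = Real.sin |θ'| := by field_simp
        _ ≤ |Real.sin θ| := hs
  have hθsq : θ' ^ 2 ≤ 4 / 3 * ε ^ 2 := by
    have h1 : |θ'| * Real.cos θ ≤ ε := htan.trans hsin
    have h2' : (|θ'| * Real.cos θ) ^ 2 ≤ ε ^ 2 := pow_le_pow_left₀ (by positivity) h1 2
    have e1 : θ' ^ 2 * Real.cos θ ^ 2 ≤ ε ^ 2 := by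
      calc θ' ^ 2 * Real.cos θ ^ 2 = (|θ'| * Real.cos θ) ^ 2 := by
            rw [mul_pow, sq_abs]
        _ ≤ ε ^ 2 := h2'
    have e2 : θ' ^ 2 * (3 / 4) ≤ θ' ^ 2 * Real.cos θ ^ 2 :=
      mul_le_mul_of_nonneg_left hc2 (sq_nonneg θ')
    linarith
  have hhalf : 1 - Real.cos (m * θ') ≤ (m * θ') ^ 2 / 2 := by
    have hp := Real.sin_sq_add_cos_sq ((m : ℝ) * θ' / 2)
    have hc := Real.cos_sq ((m : ℝ) * θ' / 2)
    rw [show 2 * ((m : ℝ) * θ' / 2) = (m : ℝ) * θ' by ring] at hc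
    have hb := Real.abs_sin_le_abs (x := (m : ℝ) * θ' / 2)
    nlinarith [sq_abs (Real.sin ((m : ℝ) * θ' / 2)), sq_abs ((m : ℝ) * θ' / 2),
      abs_nonneg (Real.sin ((m : ℝ) * θ' / 2)), abs_nonneg ((m : ℝ) * θ' / 2)]
  have hper : Real.cos ((m : ℝ) * θ) = Real.cos ((m : ℝ) * θ') := by
    have : (m : ℝ) * θ = (m : ℝ) * θ' + ((m * k : ℤ) : ℝ) * (2 * Real.pi) := by
      rw [hθ']; push_cast; ring
    rw [this, Real.cos_add_int_mul_two_pi]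
  rw [hper]
  have hm : (0:ℝ) ≤ (m:ℝ) ^ 2 := by positivity
  nlinarith [hhalf, hθsq, hm, mul_le_mul_of_nonneg_left hθsq hm]
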